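/- Let x(t) be a nontrivial solution of the linear cyclic negative feedback system and suppose x(t₀) ∉ 𝒩. Then for all sufficiently small ε > 0 one has x(t₀ + ε) ∈ 𝒩 and x(t₀ − ε) ∈ 𝒩 with N(x(t₀ + ε)) = N_m(x(t₀)) and N(x(t₀ − ε)) = N_M(x(t₀)). -/

import Mathlib

open Filter Topology

/-- δ₁ = −1 (index `0` in our 0-based indexing), δᵢ = 1 for the other indices. -/
def cyclicDelta (n : ℕ) [NeZero n] (i : Fin n) : ℝ := if i = 0 then -1 else 1

/-- The set Λ of vectors with all coordinates nonzero. -/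
def cyclicLambda (n : ℕ) [NeZero n] : Set (Fin n → ℝ) := {x | ∀ i, x i ≠ 0}

/-- The integer valued Lyapunov function `N(x) = card {i : δᵢ xᵢ x_{i−1} < 0}`
(cyclic indices, `x₀ = xₙ`). -/
noncomputable def cyclicN (n : ℕ) [NeZero n] (x : Fin n → ℝ) : ℕ :=
  Nat.card {i : Fin n // cyclicDelta n i * x i * x (i - 1) < 0}

/-- `N_m(x)`: the minimum of `N` over `U ∩ Λ` for all sufficiently small
neighborhoods `U` of `x`, i.e. the least value of `N` attained in every
neighborhood of `x` within `Λ`. -/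
noncomputable def cyclicNm (n : ℕ) [NeZero n] (x : Fin n → ℝ) : ℕ :=
  sInf {k | ∃ᶠ y in 𝓝[cyclicLambda n] x, cyclicN n y = k}

/-- `N_M(x)`: the maximum of `N` over `U ∩ Λ` for all sufficiently small
neighborhoods `U` of `x`. -/
noncomputable def cyclicNM (n : ℕ) [NeZero n] (x : Fin n → ℝ) : ℕ :=
  sSup {k | ∃ᶠ y in 𝓝[cyclicLambda n] x, cyclicN n y = k}

/-- The set 𝒩 on which `N` extends continuously. -/
def cyclicGood (n : ℕ) [NeZero n] : Set (Fin n → ℝ) :=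
  {x | cyclicNm n x = cyclicNM n x}

/-- ñ = n if n is odd, n − 1 if n is even. -/
def ntilde (n : ℕ) : ℕ := if n % 2 = 1 then n else n - 1

/-- A linear cyclic negative feedback system: coefficients `diag t i = a_{ii}(t)`
and `sub t i = a_{i,i−1}(t)` (cyclically, `sub t 0 = a_{1,n}(t)`), all continuous,
with `a_{1,n}(t) < 0` and `a_{i,i−1}(t) > 0` for `i ≠ 1`. -/
structure LinCNF (n : ℕ) [NeZero n] where
  diag : ℝ → Fin n → ℝ
  sub : ℝ → Fin n → ℝ
  cont_diag : ∀ i, Continuous fun t => diag t i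
  cont_sub : ∀ i, Continuous fun t => sub t i
  sub_neg : ∀ t, sub t 0 < 0
  sub_pos : ∀ t (i : Fin n), i ≠ 0 → 0 < sub t i

/-- `x` is a solution of the linear system `ẋᵢ = a_{ii}(t)xᵢ + a_{i,i−1}(t)x_{i−1}`. -/
def LinCNF.IsSolution {n : ℕ} [NeZero n] (S : LinCNF n) (x : ℝ → Fin n → ℝ) : Prop :=
  ∀ (t : ℝ) (i : Fin n),
    HasDerivAt (fun s => x s i) (S.diag t i * x t i + S.sub t i * x t (i - 1)) t

/-- `Φ` is the fundamental (matrix) solution, `Φ(0) = I`. -/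
def LinCNF.IsFundamental {n : ℕ} [NeZero n] (S : LinCNF n)
    (Φ : ℝ → (Fin n → ℝ) →ₗ[ℝ] (Fin n → ℝ)) : Prop :=
  Φ 0 = LinearMap.id ∧ ∀ x₀ : Fin n → ℝ, S.IsSolution fun t => Φ t x₀

/-- The cone `K_h = {0} ∪ {x : N_M(x) ≤ 2h − 1}`. -/
def Kcone (n : ℕ) [NeZero n] (h : ℕ) : Set (Fin n → ℝ) :=
  {0} ∪ {x | cyclicNM n x ≤ 2 * h - 1}

/-- The complementary cone `K^h = {0} ∪ {x : N_m(x) > 2h − 1}`. -/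
def KconeUp (n : ℕ) [NeZero n] (h : ℕ) : Set (Fin n → ℝ) :=
  {0} ∪ {x | 2 * h - 1 < cyclicNm n x}

open Fin.NatCast Fin.CommRing

/-- values ±1 -/
def IsSgn (r : ℝ) : Prop := r = 1 ∨ r = -1

lemma IsSgn.mul {r s : ℝ} (hr : IsSgn r) (hs : IsSgn s) : IsSgn (r * s) := by
  rcases hr with h | h <;> rcases hs with h' | h' <;> simp [IsSgn, h, h']

lemma IsSgn.neg {r : ℝ} (hr : IsSgn r) : IsSgn (-r) := by
  rcases hr with h | h <;> simp [IsSgn, h]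

lemma IsSgn.ne_zero {r : ℝ} (hr : IsSgn r) : r ≠ 0 := by
  rcases hr with h | h <;> simp [h]

lemma IsSgn.mul_self {r : ℝ} (hr : IsSgn r) : r * r = 1 := by
  rcases hr with h | h <;> simp [h]

lemma isSgn_delta {n : ℕ} [NeZero n] (i : Fin n) : IsSgn (cyclicDelta n i) := by
  unfold cyclicDelta; split <;> simp [IsSgn]

lemma isSgn_sign {w : ℝ} (hw : w ≠ 0) : IsSgn (Real.sign w) := by
  rcases hw.lt_or_gt with h | h
  · exact Or.inr (Real.sign_of_neg h)
  · exact Or.inl (Real.sign_of_pos h)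

lemma sign_mul_pos {w : ℝ} (hw : w ≠ 0) : 0 < Real.sign w * w := by
  rcases hw.lt_or_gt with h | h
  · rw [Real.sign_of_neg h]; nlinarith
  · rw [Real.sign_of_pos h]; nlinarith

lemma IsSgn.eq_sign {r w : ℝ} (hr : IsSgn r) (h : 0 < r * w) : r = Real.sign w := by
  rcases hr with h' | h'
  · subst h'; rw [Real.sign_of_pos]; linarith
  · subst h'; rw [Real.sign_of_neg]; linarith

lemma isSgn_prod {ι : Type*} (s : Finset ι) (f : ι → ℝ) (h : ∀ i ∈ s, IsSgn (f i)) :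
    IsSgn (∏ i ∈ s, f i) := by
  refine Finset.prod_induction f IsSgn (fun a b => IsSgn.mul) (Or.inl rfl) h

open Classical in
/-- least k with z (i - k) ≠ 0 -/
noncomputable def chainLen {n : ℕ} [NeZero n] (z : Fin n → ℝ) (i : Fin n) : ℕ :=
  if h : ∃ k : ℕ, z (i - (k : Fin n)) ≠ 0 then Nat.find h else 0

open Classical in
noncomputable def chainUp {n : ℕ} [NeZero n] (z : Fin n → ℝ) (j : Fin n) : ℕ :=
  if h : ∃ m : ℕ, z (j + (m : Fin n)) ≠ 0 then Nat.find h else 0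

section chain
variable {n : ℕ} [NeZero n] {z : Fin n → ℝ} (hz : z ≠ 0)

lemma exists_nonzero (hz : z ≠ 0) : ∃ j, z j ≠ 0 := by
  by_contra h; push_neg at h; exact hz (funext h)

lemma chain_exists (hz : z ≠ 0) (i : Fin n) : ∃ k : ℕ, z (i - (k : Fin n)) ≠ 0 := by
  obtain ⟨j, hj⟩ := exists_nonzero hz
  exact ⟨(i - j).val, by rwa [Fin.cast_val_eq_self, sub_sub_cancel]⟩

lemma chainUp_exists (hz : z ≠ 0) (j : Fin n) : ∃ m : ℕ, z (j + (m : Fin n)) ≠ 0 := by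
  obtain ⟨i, hi⟩ := exists_nonzero hz
  exact ⟨(i - j).val, by rwa [Fin.cast_val_eq_self, add_sub_cancel]⟩

lemma chainLen_spec (hz : z ≠ 0) (i : Fin n) : z (i - (chainLen z i : Fin n)) ≠ 0 := by
  classical
  rw [chainLen, dif_pos (chain_exists hz i)]
  exact Nat.find_spec (chain_exists hz i)

lemma chainLen_min (hz : z ≠ 0) (i : Fin n) {m : ℕ} (hm : m < chainLen z i) :
    z (i - (m : Fin n)) = 0 := by
  classical
  rw [chainLen, dif_pos (chain_exists hz i)] at hm
  have := Nat.find_min (chain_exists hz i) hm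
  push_neg at this; exact this

lemma chainUp_spec (hz : z ≠ 0) (j : Fin n) : z (j + (chainUp z j : Fin n)) ≠ 0 := by
  classical
  rw [chainUp, dif_pos (chainUp_exists hz j)]
  exact Nat.find_spec (chainUp_exists hz j)

lemma chainUp_min (hz : z ≠ 0) (j : Fin n) {m : ℕ} (hm : m < chainUp z j) :
    z (j + (m : Fin n)) = 0 := by
  classical
  rw [chainUp, dif_pos (chainUp_exists hz j)] at hm
  have := Nat.find_min (chainUp_exists hz j) hm
  push_neg at this; exact this

lemma chainLen_lt (hz : z ≠ 0) (i : Fin n) : chainLen z i < n := by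
  obtain ⟨j, hj⟩ := exists_nonzero hz
  by_contra h
  push_neg at h
  have : ((i - j).val : ℕ) < chainLen z i := lt_of_lt_of_le (i - j).isLt h
  have h0 := chainLen_min hz i this
  rw [Fin.cast_val_eq_self, sub_sub_cancel] at h0
  exact hj h0

lemma chainLen_eq_zero (hz : z ≠ 0) {i : Fin n} (hi : z i ≠ 0) : chainLen z i = 0 := by
  classical
  rw [chainLen, dif_pos (chain_exists hz i), Nat.find_eq_zero]
  simpa using hi

lemma chainLen_of_zero (hz : z ≠ 0) {i : Fin n} (hi : z i = 0) :
    chainLen z i = chainLen z (i - 1) + 1 := by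
  classical
  rw [chainLen, dif_pos (chain_exists hz i), Nat.find_eq_iff]
  constructor
  · have := chainLen_spec hz (i - 1)
    rwa [show i - ((chainLen z (i-1) + 1 : ℕ) : Fin n) = (i - 1) - (chainLen z (i-1) : Fin n) by
      push_cast; ring]
  · intro m hm
    push_neg
    match m, hm with
    | 0, _ => simpa using hi
    | (l+1), hm =>
      have hl : l < chainLen z (i - 1) := by omega
      have := chainLen_min hz (i - 1) hl
      rwa [show (i - 1) - (l : Fin n) = i - ((l + 1 : ℕ) : Fin n) by push_cast; ring] at this

end chain

/-- right-limit sign pattern -/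
noncomputable def sigp {n : ℕ} [NeZero n] (z : Fin n → ℝ) (i : Fin n) : ℝ :=
  (∏ l ∈ Finset.range (chainLen z i), cyclicDelta n (i - (l : Fin n))) *
    Real.sign (z (i - (chainLen z i : Fin n)))

/-- left-limit sign pattern -/
noncomputable def sigm {n : ℕ} [NeZero n] (z : Fin n → ℝ) (i : Fin n) : ℝ :=
  (-1) ^ (chainLen z i) * sigp z i

section sig
variable {n : ℕ} [NeZero n] {z : Fin n → ℝ}

lemma isSgn_sigp (hz : z ≠ 0) (i : Fin n) : IsSgn (sigp z i) :=
  (isSgn_prod _ _ fun l _ => isSgn_delta _).mul (isSgn_sign (chainLen_spec hz i))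

lemma isSgn_sigm (hz : z ≠ 0) (i : Fin n) : IsSgn (sigm z i) := by
  have : IsSgn ((-1 : ℝ) ^ chainLen z i) := by
    rcases Nat.even_or_odd (chainLen z i) with h | h
    · exact Or.inl (h.neg_one_pow)
    · exact Or.inr (h.neg_one_pow)
  exact this.mul (isSgn_sigp hz i)

lemma sigp_of_ne (hz : z ≠ 0) {i : Fin n} (hi : z i ≠ 0) : sigp z i = Real.sign (z i) := by
  rw [sigp, chainLen_eq_zero hz hi]; simp

lemma sigm_of_ne (hz : z ≠ 0) {i : Fin n} (hi : z i ≠ 0) : sigm z i = Real.sign (z i) := by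
  rw [sigm, chainLen_eq_zero hz hi, sigp_of_ne hz hi]; simp

lemma sigp_of_zero (hz : z ≠ 0) {i : Fin n} (hi : z i = 0) :
    sigp z i = cyclicDelta n i * sigp z (i - 1) := by
  rw [sigp, sigp, chainLen_of_zero hz hi]
  rw [Finset.prod_range_succ']
  have h1 : ∀ l : ℕ, i - ((l + 1 : ℕ) : Fin n) = (i - 1) - (l : Fin n) := by
    intro l; push_cast; ring
  simp only [h1, Nat.cast_zero, sub_zero]
  ring

lemma sigm_of_zero (hz : z ≠ 0) {i : Fin n} (hi : z i = 0) :
    sigm z i = -(cyclicDelta n i) * sigm z (i - 1) := by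
  rw [sigm, sigm, chainLen_of_zero hz hi, sigp_of_zero hz hi, pow_succ]
  ring

/- ## Counting -/

section counting
variable {n : ℕ} [NeZero n]

/-- edge factor -/
noncomputable def edgeF (n : ℕ) [NeZero n] (τ : Fin n → ℝ) (j : Fin n) : ℝ :=
  cyclicDelta n j * τ j * τ (j - 1)

lemma cyclicN_eq_card (τ : Fin n → ℝ) :
    cyclicN n τ = (Finset.univ.filter fun j => edgeF n τ j < 0).card := by
  rw [cyclicN, Nat.card_eq_fintype_card, Fintype.card_subtype]
  rfl

lemma isSgn_edgeF {τ : Fin n → ℝ} (hτ : ∀ i, IsSgn (τ i)) (j : Fin n) :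
    IsSgn (edgeF n τ j) := ((isSgn_delta j).mul (hτ j)).mul (hτ (j - 1))

lemma IsSgn.lt_iff {r : ℝ} (hr : IsSgn r) : r < 0 ↔ r = -1 := by
  rcases hr with h | h <;> rw [h] <;> norm_num

lemma prod_sgn_eq_pow {ι : Type*} [DecidableEq ι] (s : Finset ι) (f : ι → ℝ)
    (h : ∀ i ∈ s, IsSgn (f i)) :
    ∏ i ∈ s, f i = (-1 : ℝ) ^ (s.filter fun i => f i < 0).card := by
  classical
  induction s using Finset.induction_on with
  | empty => simp
  | @insert a s ha ih =>
    rw [Finset.prod_insert ha, Finset.filter_insert,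
      ih (fun i hi => h i (Finset.mem_insert_of_mem hi))]
    rcases h a (Finset.mem_insert_self a s) with h1 | h1 <;> rw [h1]
    · rw [if_neg (by norm_num)]; ring
    · rw [if_pos (by norm_num), Finset.card_insert_of_notMem (fun hc => ha (Finset.mem_filter.1 hc).1),
        pow_succ]
      ring

lemma telescope_prod (D A : ℕ → ℝ) (hA : ∀ l, IsSgn (A l)) (m : ℕ) :
    ∏ l ∈ Finset.range m, (D l * A l * A (l + 1)) =
      (∏ l ∈ Finset.range m, D l) * (A 0 * A m) := by
  induction m with
  | zero => simp [(hA 0).mul_self]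
  | succ m ih =>
    rw [Finset.prod_range_succ, Finset.prod_range_succ, ih]
    have h2 := (hA m).mul_self
    linear_combination (∏ l ∈ Finset.range m, D l) * A 0 * D m * A (m + 1) * h2

/-- parity core: minimal count -/
lemma count_min_core (L : ℕ) (g g' : ℕ → ℝ)
    (hg : ∀ l, IsSgn (g l)) (hg' : ∀ l, IsSgn (g' l))
    (hprod : ∏ l ∈ Finset.range (L + 1), g l = ∏ l ∈ Finset.range (L + 1), g' l)
    (hint : ∀ l, 1 ≤ l → l ≤ L → g' l = 1) :
    ((Finset.range (L + 1)).filter fun l => g' l < 0).card ≤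
      ((Finset.range (L + 1)).filter fun l => g l < 0).card := by
  classical
  set c := ((Finset.range (L + 1)).filter fun l => g l < 0).card with hc
  set c' := ((Finset.range (L + 1)).filter fun l => g' l < 0).card with hc'
  have hpow : (-1 : ℝ) ^ c = (-1 : ℝ) ^ c' := by
    rw [← prod_sgn_eq_pow _ _ (fun i _ => hg i), ← prod_sgn_eq_pow _ _ (fun i _ => hg' i), hprod]
  have hsub : ((Finset.range (L + 1)).filter fun l => g' l < 0) ⊆ {0} := by
    intro l hl
    rcases Finset.mem_filter.1 hl with ⟨hl1, hl2⟩
    rcases Nat.eq_zero_or_pos l with h | h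
    · simp [h]
    · exfalso; rw [hint l h (by have := Finset.mem_range.1 hl1; omega)] at hl2; linarith
  have hc'le : c' ≤ 1 := le_trans (Finset.card_le_card hsub) (by simp)
  rcases Nat.eq_zero_or_pos c with h | h
  · have h1 : (-1 : ℝ) ^ c' = 1 := by rw [← hpow, h, pow_zero]
    have : c' ≠ 1 := by intro hc1; rw [hc1, pow_one] at h1; norm_num at h1
    omega
  · omega

/-- parity core: maximal count -/
lemma count_max_core (L : ℕ) (g g'' : ℕ → ℝ)
    (hg : ∀ l, IsSgn (g l)) (hg'' : ∀ l, IsSgn (g'' l))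
    (hprod : ∏ l ∈ Finset.range (L + 1), g l = ∏ l ∈ Finset.range (L + 1), g'' l)
    (hint : ∀ l, 1 ≤ l → l ≤ L → g'' l = -1) :
    ((Finset.range (L + 1)).filter fun l => g l < 0).card ≤
      ((Finset.range (L + 1)).filter fun l => g'' l < 0).card := by
  classical
  set c := ((Finset.range (L + 1)).filter fun l => g l < 0).card with hc
  set c'' := ((Finset.range (L + 1)).filter fun l => g'' l < 0).card with hc''
  have hpow : (-1 : ℝ) ^ c = (-1 : ℝ) ^ c'' := by
    rw [← prod_sgn_eq_pow _ _ (fun i _ => hg i), ← prod_sgn_eq_pow _ _ (fun i _ => hg'' i), hprod]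
  have hsub : Finset.Ico 1 (L + 1) ⊆ (Finset.range (L + 1)).filter fun l => g'' l < 0 := by
    intro l hl
    rcases Finset.mem_Ico.1 hl with ⟨h1, h2⟩
    refine Finset.mem_filter.2 ⟨Finset.mem_range.2 h2, ?_⟩
    rw [hint l h1 (by omega)]; norm_num
  have hL : L ≤ c'' := by
    have := Finset.card_le_card hsub
    simpa using this
  have hcle : c ≤ L + 1 := by
    have := Finset.card_filter_le (Finset.range (L + 1)) fun l => g l < 0
    simpa using this
  have hc''le : c'' ≤ L + 1 := by
    have := Finset.card_filter_le (Finset.range (L + 1)) fun l => g'' l < 0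
    simpa using this
  rcases Nat.lt_or_ge c (L + 1) with h | h
  · omega
  · have hcL : c = L + 1 := by omega
    have : c'' = L + 1 := by
      rcases Nat.lt_or_ge c'' (L + 1) with h' | h'
      · exfalso
        have hc''L : c'' = L := by omega
        rw [hcL, hc''L, pow_succ] at hpow
        have h0 : (-1 : ℝ) ^ L = 0 := by nlinarith [hpow]
        exact pow_ne_zero L (show (-1:ℝ) ≠ 0 by norm_num) h0
      · omega
    omega

end counting

/- ## Fiber decomposition -/

section fiber
variable {n : ℕ} [NeZero n] {z : Fin n → ℝ}

noncomputable def nuF (z : Fin n → ℝ) (j : Fin n) : Fin n := j + ((chainUp z j : ℕ) : Fin n)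

lemma chainUp_le (hz : z ≠ 0) {j : Fin n} {m : ℕ} (h : z (j + (m : Fin n)) ≠ 0) :
    chainUp z j ≤ m := by
  classical
  rw [chainUp, dif_pos (chainUp_exists hz j)]
  exact Nat.find_le h

lemma chainUp_eq (hz : z ≠ 0) {j : Fin n} {l : ℕ} (hl : z (j + (l : Fin n)) ≠ 0)
    (hmin : ∀ m < l, z (j + (m : Fin n)) = 0) : chainUp z j = l := by
  refine le_antisymm (chainUp_le hz hl) (le_of_not_gt fun h => ?_)
  exact chainUp_spec hz j (hmin _ h)

lemma nu_eq_iff (hz : z ≠ 0) {i : Fin n} (hi : z i ≠ 0) (j : Fin n) :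
    nuF z j = i ↔ ∃ l, l ≤ chainLen z (i - 1) ∧ j = i - (l : Fin n) := by
  constructor
  · intro h
    set u := chainUp z j with hu
    set L := chainLen z (i - 1) with hL
    have hj : j = i - (u : Fin n) := by rw [← h, nuF]; ring
    refine ⟨u, ?_, hj⟩
    by_contra hgt
    push_neg at hgt
    have h1 : z ((i - 1) - (L : Fin n)) ≠ 0 := chainLen_spec hz (i - 1)
    have h2 : z (j + ((u - (L + 1) : ℕ) : Fin n)) = 0 := chainUp_min hz j (by omega)
    apply h1
    rw [← h2]
    congr 1
    rw [hj, Nat.cast_sub (by omega : L + 1 ≤ u)]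
    push_cast
    ring
  · rintro ⟨l, hl, rfl⟩
    have hcu : chainUp z (i - (l : Fin n)) = l := by
      apply chainUp_eq hz
      · rwa [sub_add_cancel]
      · intro m hm
        have hlt : l - m - 1 < chainLen z (i - 1) := by omega
        have h0 := chainLen_min hz (i - 1) hlt
        rw [← h0]
        congr 1
        have hc : ((l - m - 1 : ℕ) : Fin n) = (l : Fin n) - (m : Fin n) - 1 := by
          rw [show l - m - 1 = l - (m + 1) by omega, Nat.cast_sub (by omega : m + 1 ≤ l)]
          push_cast
          ring
        rw [hc]
        ring
    rw [nuF, hcu, sub_add_cancel]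

lemma cyclicN_fiber (hz : z ≠ 0) (π : Fin n → ℝ) :
    cyclicN n π = ∑ i ∈ Finset.univ.filter (fun i => z i ≠ 0),
      ((Finset.range (chainLen z (i - 1) + 1)).filter
        (fun l : ℕ => edgeF n π (i - (l : Fin n)) < 0)).card := by
  classical
  rw [cyclicN_eq_card]
  rw [Finset.card_eq_sum_card_fiberwise (f := nuF z)
    (t := Finset.univ.filter (fun i => z i ≠ 0))
    (fun j _ => Finset.mem_filter.2 ⟨Finset.mem_univ _, chainUp_spec hz j⟩)]
  refine Finset.sum_congr rfl fun i hi => ?_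
  have hzi : z i ≠ 0 := (Finset.mem_filter.1 hi).2
  set L := chainLen z (i - 1) with hL
  have hset : (Finset.univ.filter fun j => edgeF n π j < 0).filter (fun j => nuF z j = i)
      = ((Finset.range (L + 1)).filter fun l : ℕ => edgeF n π (i - (l : Fin n)) < 0).image
          (fun l : ℕ => i - (l : Fin n)) := by
    ext j
    simp only [Finset.mem_filter, Finset.mem_image, Finset.mem_univ, true_and,
      Finset.mem_range]
    constructor
    · rintro ⟨he, hν⟩
      obtain ⟨l, hl, rfl⟩ := (nu_eq_iff hz hzi j).1 hν
      exact ⟨l, ⟨by omega, he⟩, rfl⟩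
    · rintro ⟨l, ⟨hl, he⟩, rfl⟩
      exact ⟨he, (nu_eq_iff hz hzi _).2 ⟨l, by omega, rfl⟩⟩
  rw [hset, Finset.card_image_of_injOn]
  intro l₁ h₁ l₂ h₂ hval
  have hL1 : L + 1 ≤ n := chainLen_lt hz (i - 1)
  have h₁' : l₁ < n := by
    have := Finset.mem_range.1 (Finset.mem_filter.1 h₁).1; omega
  have h₂' : l₂ < n := by
    have := Finset.mem_range.1 (Finset.mem_filter.1 h₂).1; omega
  have : (l₁ : Fin n) = (l₂ : Fin n) := by
    have h' : i - (l₁ : Fin n) = i - (l₂ : Fin n) := hval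
    have := congrArg (fun w => i - w) h'
    simpa using this
  calc l₁ = ((l₁ : Fin n) : ℕ) := (Fin.val_cast_of_lt h₁').symm
    _ = ((l₂ : Fin n) : ℕ) := by rw [this]
    _ = l₂ := Fin.val_cast_of_lt h₂'

/- ## The sandwich lemma -/

lemma sigp_cons (hz : z ≠ 0) {i : Fin n} (hi : z i ≠ 0) : 0 < sigp z i * z i := by
  rw [sigp_of_ne hz hi]; exact sign_mul_pos hi

lemma sigm_cons (hz : z ≠ 0) {i : Fin n} (hi : z i ≠ 0) : 0 < sigm z i * z i := by
  rw [sigm_of_ne hz hi]; exact sign_mul_pos hi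

lemma N_sandwich (hz : z ≠ 0) (τ : Fin n → ℝ) (hτ : ∀ i, IsSgn (τ i))
    (hcons : ∀ i, z i ≠ 0 → 0 < τ i * z i) :
    cyclicN n (sigp z) ≤ cyclicN n τ ∧ cyclicN n τ ≤ cyclicN n (sigm z) := by
  classical
  rw [cyclicN_fiber hz τ, cyclicN_fiber hz (sigp z), cyclicN_fiber hz (sigm z)]
  have key : ∀ i, z i ≠ 0 →
      (∀ (π : Fin n → ℝ), (∀ j, IsSgn (π j)) → (∀ j, z j ≠ 0 → 0 < π j * z j) →
        ∏ l ∈ Finset.range (chainLen z (i - 1) + 1), edgeF n π (i - (l : Fin n)) =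
          (∏ l ∈ Finset.range (chainLen z (i - 1) + 1), cyclicDelta n (i - (l : Fin n))) *
            (Real.sign (z i) * Real.sign (z (i - ((chainLen z (i - 1) + 1 : ℕ) : Fin n))))) := by
    intro i hzi π hπ hπc
    set L := chainLen z (i - 1) with hL
    have step : ∀ l : ℕ, edgeF n π (i - (l : Fin n)) =
        (fun l : ℕ => cyclicDelta n (i - (l : Fin n))) l *
          (fun l : ℕ => π (i - (l : Fin n))) l * (fun l : ℕ => π (i - (l : Fin n))) (l + 1) := by
      intro l
      simp only [edgeF]
      congr 2
      push_cast
      ring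
    rw [Finset.prod_congr rfl fun l _ => step l,
      telescope_prod _ _ (fun l => hπ _) (L + 1)]
    have e0 : π (i - ((0 : ℕ) : Fin n)) = Real.sign (z i) := by
      rw [show i - ((0 : ℕ) : Fin n) = i by push_cast; ring]
      exact (hπ i).eq_sign (hπc i hzi)
    have hanchor : z (i - ((L + 1 : ℕ) : Fin n)) ≠ 0 := by
      have := chainLen_spec hz (i - 1)
      rwa [show (i - 1) - ((L : ℕ) : Fin n) = i - ((L + 1 : ℕ) : Fin n) by push_cast; ring] at this
    have e1 : π (i - ((L + 1 : ℕ) : Fin n)) = Real.sign (z (i - ((L + 1 : ℕ) : Fin n))) :=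
      (hπ _).eq_sign (hπc _ hanchor)
    rw [e0, e1]
  have hzero : ∀ i, z i ≠ 0 → ∀ l : ℕ, 1 ≤ l → l ≤ chainLen z (i - 1) →
      z (i - (l : Fin n)) = 0 := by
    intro i _ l h1 h2
    have := chainLen_min hz (i - 1) (show l - 1 < chainLen z (i - 1) by omega)
    rwa [show (i - 1) - ((l - 1 : ℕ) : Fin n) = i - (l : Fin n) by
      rw [Nat.cast_sub h1]; push_cast; ring] at this
  constructor <;> refine Finset.sum_le_sum fun i hi => ?_
  · have hzi : z i ≠ 0 := (Finset.mem_filter.1 hi).2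
    apply count_min_core (chainLen z (i - 1))
      (fun l : ℕ => edgeF n τ (i - (l : Fin n))) (fun l : ℕ => edgeF n (sigp z) (i - (l : Fin n)))
      (fun l => isSgn_edgeF hτ _) (fun l => isSgn_edgeF (isSgn_sigp hz) _)
    · rw [key i hzi τ hτ hcons, key i hzi (sigp z) (isSgn_sigp hz) (fun j => sigp_cons hz)]
    · intro l h1 h2
      have hj : z (i - (l : Fin n)) = 0 := hzero i hzi l h1 h2
      set j := i - (l : Fin n) with hjdef
      have h1' := (isSgn_delta (n := n) j).mul_self
      have h2' := (isSgn_sigp hz (j - 1)).mul_self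
      rw [edgeF, sigp_of_zero hz hj]
      linear_combination (sigp z (j - 1) * sigp z (j - 1)) * h1' + h2'
  · have hzi : z i ≠ 0 := (Finset.mem_filter.1 hi).2
    apply count_max_core (chainLen z (i - 1))
      (fun l : ℕ => edgeF n τ (i - (l : Fin n))) (fun l : ℕ => edgeF n (sigm z) (i - (l : Fin n)))
      (fun l => isSgn_edgeF hτ _) (fun l => isSgn_edgeF (isSgn_sigm hz) _)
    · rw [key i hzi τ hτ hcons, key i hzi (sigm z) (isSgn_sigm hz) (fun j => sigm_cons hz)]
    · intro l h1 h2
      have hj : z (i - (l : Fin n)) = 0 := hzero i hzi l h1 h2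
      set j := i - (l : Fin n) with hjdef
      have h1' := (isSgn_delta (n := n) j).mul_self
      have h2' := (isSgn_sigm hz (j - 1)).mul_self
      rw [edgeF, sigm_of_zero hz hj]
      linear_combination (-(sigm z (j - 1) * sigm z (j - 1))) * h1' - h2'

end fiber

/- ## Computation of Nm and NM -/

section nmnm
variable {n : ℕ} [NeZero n] {z : Fin n → ℝ}

lemma cyclicN_pattern (τ y : Fin n → ℝ) (hτ : ∀ i, IsSgn (τ i))
    (h : ∀ i, 0 < τ i * y i) : cyclicN n y = cyclicN n τ := by
  rw [cyclicN, cyclicN]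
  apply Nat.card_congr (Equiv.subtypeEquivRight _)
  intro j
  have hpos : 0 < (τ j * y j) * (τ (j - 1) * y (j - 1)) := mul_pos (h j) (h (j - 1))
  have h1 := (hτ j).mul_self
  have h2 := (hτ (j - 1)).mul_self
  have key : cyclicDelta n j * y j * y (j - 1) =
      (cyclicDelta n j * τ j * τ (j - 1)) * ((τ j * y j) * (τ (j - 1) * y (j - 1))) := by
    linear_combination (-(cyclicDelta n j * y j * y (j - 1) * (τ (j - 1) * τ (j - 1)))) * h1 +
      (-(cyclicDelta n j * y j * y (j - 1))) * h2
  rw [key]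
  constructor
  · intro hlt; nlinarith
  · intro hlt; nlinarith

lemma freq_pattern (τ : Fin n → ℝ) (hτ : ∀ i, IsSgn (τ i))
    (hcons : ∀ i, z i ≠ 0 → 0 < τ i * z i) :
    ∃ᶠ y in 𝓝[cyclicLambda n] z, cyclicN n y = cyclicN n τ := by
  classical
  set y : ℕ → Fin n → ℝ := fun m i => if z i = 0 then (1 / (m + 1 : ℝ)) * τ i else z i with hy
  have hmem : ∀ m, y m ∈ cyclicLambda n := by
    intro m i
    by_cases hi : z i = 0
    · simp only [hy, if_pos hi]
      have : (1 / (m + 1 : ℝ)) ≠ 0 := by positivity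
      exact mul_ne_zero this (hτ i).ne_zero
    · simpa only [hy, if_neg hi] using hi
  have hpat : ∀ m i, 0 < τ i * y m i := by
    intro m i
    by_cases hi : z i = 0
    · simp only [hy, if_pos hi]
      have := (hτ i).mul_self
      have h1 : (0:ℝ) < 1 / (m + 1 : ℝ) := by positivity
      nlinarith
    · simp only [hy, if_neg hi]
      exact hcons i hi
  have htend : Filter.Tendsto y Filter.atTop (𝓝 z) := by
    rw [tendsto_pi_nhds]
    intro i
    by_cases hi : z i = 0
    · simp only [hy, if_pos hi, hi]
      have : Filter.Tendsto (fun m : ℕ => (1 / (m + 1 : ℝ))) Filter.atTop (𝓝 0) :=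
        tendsto_one_div_add_atTop_nhds_zero_nat
      simpa using this.mul_const (τ i)
    · simp only [hy, if_neg hi]
      exact tendsto_const_nhds
  have htend' : Filter.Tendsto y Filter.atTop (𝓝[cyclicLambda n] z) :=
    tendsto_nhdsWithin_iff.2 ⟨htend, Filter.Eventually.of_forall hmem⟩
  exact htend'.frequently (Filter.Frequently.of_forall fun m =>
    cyclicN_pattern τ (y m) hτ (hpat m))

lemma eventually_cons (z : Fin n → ℝ) :
    ∀ᶠ y in 𝓝[cyclicLambda n] z, ∀ i, z i ≠ 0 → 0 < y i * z i := by
  apply eventually_nhdsWithin_of_eventually_nhds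
  rw [eventually_all]
  intro i
  by_cases hi : z i = 0
  · exact Filter.Eventually.of_forall fun y h => absurd hi h
  · have hcont : Continuous fun y : Fin n → ℝ => y i * z i :=
      (continuous_apply i).mul continuous_const
    have hzz : (0:ℝ) < z i * z i := by
      have hi' : z i ≠ 0 := hi
      rcases hi'.lt_or_gt with h | h <;> nlinarith
    have := (hcont.tendsto z).eventually (eventually_gt_nhds hzz)
    exact this.mono fun y hy _ => hy

theorem Nm_eq_sigp (hz : z ≠ 0) :
    cyclicNm n z = cyclicN n (sigp z) ∧ cyclicNM n z = cyclicN n (sigm z) := by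
  have hmem_p : cyclicN n (sigp z) ∈ {k | ∃ᶠ y in 𝓝[cyclicLambda n] z, cyclicN n y = k} :=
    freq_pattern (sigp z) (isSgn_sigp hz) (fun i hi => sigp_cons hz hi)
  have hmem_m : cyclicN n (sigm z) ∈ {k | ∃ᶠ y in 𝓝[cyclicLambda n] z, cyclicN n y = k} :=
    freq_pattern (sigm z) (isSgn_sigm hz) (fun i hi => sigm_cons hz hi)
  have hbound : ∀ k ∈ {k | ∃ᶠ y in 𝓝[cyclicLambda n] z, cyclicN n y = k},
      cyclicN n (sigp z) ≤ k ∧ k ≤ cyclicN n (sigm z) := by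
    intro k hk
    obtain ⟨y, ⟨hk', hcons⟩, hyΛ⟩ :=
      ((hk.and_eventually (eventually_cons z)).and_eventually
        (eventually_mem_nhdsWithin)).exists
    set τ : Fin n → ℝ := fun i => Real.sign (y i) with hτdef
    have hτ : ∀ i, IsSgn (τ i) := fun i => isSgn_sign (hyΛ i)
    have hNy : cyclicN n y = cyclicN n τ :=
      cyclicN_pattern τ y hτ fun i => sign_mul_pos (hyΛ i)
    have hcons' : ∀ i, z i ≠ 0 → 0 < τ i * z i := by
      intro i hi
      have h1 := hcons i hi
      have h2 := hyΛ i
      rcases h2.lt_or_gt with h | h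
      · rw [hτdef]; simp only; rw [Real.sign_of_neg h]; nlinarith
      · rw [hτdef]; simp only; rw [Real.sign_of_pos h]; nlinarith
    have := N_sandwich hz τ hτ hcons'
    rw [← hNy, hk'] at this
    exact this
  constructor
  · exact le_antisymm (Nat.sInf_le hmem_p)
      (le_csInf ⟨_, hmem_p⟩ fun k hk => (hbound k hk).1)
  · exact le_antisymm (csSup_le ⟨_, hmem_m⟩ fun k hk => (hbound k hk).2)
      (le_csSup ⟨cyclicN n (sigm z), fun k hk => (hbound k hk).2⟩ hmem_m)

lemma sigp_of_lambda {w : Fin n → ℝ} (hw : ∀ i, w i ≠ 0) :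
    sigp w = fun i => Real.sign (w i) := by
  funext i
  have hzw : w ≠ 0 := fun h => hw i (by rw [h]; rfl)
  exact sigp_of_ne hzw (hw i)

lemma sigm_of_lambda {w : Fin n → ℝ} (hw : ∀ i, w i ≠ 0) :
    sigm w = fun i => Real.sign (w i) := by
  funext i
  have hzw : w ≠ 0 := fun h => hw i (by rw [h]; rfl)
  exact sigm_of_ne hzw (hw i)

end nmnm

/- ## ODE sign propagation -/

section ode
open Set Real

lemma sign_prop_right {a b g f : ℝ → ℝ} (ha : Continuous a) (hb : Continuous b)
    (hg : Continuous g) (hf : ∀ t, HasDerivAt f (a t * f t + b t * g t) t)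
    {σb s : ℝ} (hσ : ∀ t, 0 < σb * b t) {t₀ ε : ℝ}
    (hgs : ∀ t ∈ Set.Ioo t₀ (t₀ + ε), 0 < s * g t) (hf0 : f t₀ = 0) :
    ∀ t ∈ Set.Ioo t₀ (t₀ + ε), 0 < σb * s * f t := by
  set A : ℝ → ℝ := fun t => ∫ u in t₀..t, a u with hA
  have hAd : ∀ t, HasDerivAt A (a t) t := fun t =>
    intervalIntegral.integral_hasDerivAt_right (ha.intervalIntegrable _ _)
      (ha.stronglyMeasurableAtFilter _ _) ha.continuousAt
  set v : ℝ → ℝ := fun t => σb * s * (Real.exp (-A t) * f t) with hv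
  have hvd : ∀ t, HasDerivAt v (σb * s * (Real.exp (-A t) * (b t * g t))) t := by
    intro t
    have h1 : HasDerivAt (fun t => Real.exp (-A t)) (Real.exp (-A t) * (-(a t))) t :=
      ((hAd t).neg).exp
    have h2 := (h1.mul (hf t)).const_mul (σb * s)
    exact h2.congr_deriv (by ring)
  intro t ht
  have hmono : StrictMonoOn v (Set.Icc t₀ t) := by
    apply strictMonoOn_of_deriv_pos (convex_Icc _ _)
    · exact fun w _ => ((hvd w).differentiableAt.continuousAt).continuousWithinAt
    · intro w hw
      rw [interior_Icc] at hw
      rw [(hvd w).deriv]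
      have h1 : 0 < σb * b w := hσ w
      have h2 : 0 < s * g w := hgs w ⟨hw.1, lt_trans hw.2 ht.2⟩
      have h3 := Real.exp_pos (-A w)
      nlinarith [mul_pos (mul_pos h1 h2) h3]
  have hv0 : v t₀ = 0 := by simp [hv, hf0]
  have hvt : 0 < v t := by
    have := hmono (Set.left_mem_Icc.2 (le_of_lt ht.1)) (Set.right_mem_Icc.2 (le_of_lt ht.1)) ht.1
    rwa [hv0] at this
  have hrw : σb * s * f t = Real.exp (A t) * v t := by
    rw [hv]
    simp only
    rw [Real.exp_neg]
    field_simp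
  rw [hrw]
  exact mul_pos (Real.exp_pos _) hvt

lemma sign_prop_left {a b g f : ℝ → ℝ} (ha : Continuous a) (hb : Continuous b)
    (hg : Continuous g) (hf : ∀ t, HasDerivAt f (a t * f t + b t * g t) t)
    {σb s : ℝ} (hσ : ∀ t, 0 < σb * b t) {t₀ ε : ℝ}
    (hgs : ∀ t ∈ Set.Ioo (t₀ - ε) t₀, 0 < s * g t) (hf0 : f t₀ = 0) :
    ∀ t ∈ Set.Ioo (t₀ - ε) t₀, 0 < -σb * s * f t := by
  set A : ℝ → ℝ := fun t => ∫ u in t₀..t, a u with hA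
  have hAd : ∀ t, HasDerivAt A (a t) t := fun t =>
    intervalIntegral.integral_hasDerivAt_right (ha.intervalIntegrable _ _)
      (ha.stronglyMeasurableAtFilter _ _) ha.continuousAt
  set v : ℝ → ℝ := fun t => σb * s * (Real.exp (-A t) * f t) with hv
  have hvd : ∀ t, HasDerivAt v (σb * s * (Real.exp (-A t) * (b t * g t))) t := by
    intro t
    have h1 : HasDerivAt (fun t => Real.exp (-A t)) (Real.exp (-A t) * (-(a t))) t :=
      ((hAd t).neg).exp
    have h2 := (h1.mul (hf t)).const_mul (σb * s)
    exact h2.congr_deriv (by ring)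
  intro t ht
  have hmono : StrictMonoOn v (Set.Icc t t₀) := by
    apply strictMonoOn_of_deriv_pos (convex_Icc _ _)
    · exact fun w _ => ((hvd w).differentiableAt.continuousAt).continuousWithinAt
    · intro w hw
      rw [interior_Icc] at hw
      rw [(hvd w).deriv]
      have h1 : 0 < σb * b w := hσ w
      have h2 : 0 < s * g w := hgs w ⟨lt_trans ht.1 hw.1, hw.2⟩
      have h3 := Real.exp_pos (-A w)
      nlinarith [mul_pos (mul_pos h1 h2) h3]
  have hv0 : v t₀ = 0 := by simp [hv, hf0]
  have hvt : v t < 0 := by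
    have := hmono (Set.left_mem_Icc.2 (le_of_lt ht.2)) (Set.right_mem_Icc.2 (le_of_lt ht.2)) ht.2
    rwa [hv0] at this
  have hrw : -σb * s * f t = Real.exp (A t) * (-v t) := by
    rw [hv]
    simp only
    rw [Real.exp_neg]
    field_simp
  rw [hrw]
  exact mul_pos (Real.exp_pos _) (by linarith)

variable {n : ℕ} [NeZero n]

lemma sol_cont (S : LinCNF n) (x : ℝ → Fin n → ℝ) (hsol : S.IsSolution x) (i : Fin n) :
    Continuous fun t => x t i := by
  rw [continuous_iff_continuousAt]
  exact fun t => (hsol t i).continuousAt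

lemma delta_sub_pos (S : LinCNF n) (i : Fin n) (t : ℝ) :
    0 < cyclicDelta n i * S.sub t i := by
  by_cases h : i = 0
  · subst h
    rw [cyclicDelta, if_pos rfl]
    have := S.sub_neg t
    nlinarith
  · rw [cyclicDelta, if_neg h]
    have := S.sub_pos t i h
    linarith

lemma sol_signs (S : LinCNF n) (x : ℝ → Fin n → ℝ) (hsol : S.IsSolution x) (t₀ : ℝ)
    (hz : x t₀ ≠ 0) :
    ∃ ε : ℝ, 0 < ε ∧ ∀ i : Fin n,
      (∀ t ∈ Set.Ioo t₀ (t₀ + ε), 0 < sigp (x t₀) i * x t i) ∧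
      (∀ t ∈ Set.Ioo (t₀ - ε) t₀, 0 < sigm (x t₀) i * x t i) := by
  set z := x t₀ with hzdef
  have claim : ∀ m : ℕ, ∀ i : Fin n, chainLen z i ≤ m → ∃ ε : ℝ, 0 < ε ∧
      ((∀ t ∈ Set.Ioo t₀ (t₀ + ε), 0 < sigp z i * x t i) ∧
       (∀ t ∈ Set.Ioo (t₀ - ε) t₀, 0 < sigm z i * x t i)) := by
    intro m
    induction m with
    | zero =>
      intro i hle
      have h0 : chainLen z i = 0 := Nat.le_zero.1 hle
      have hzi : z i ≠ 0 := by
        have := chainLen_spec hz i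
        rwa [h0, Nat.cast_zero, sub_zero] at this
      have hpos : 0 < Real.sign (z i) * x t₀ i := by
        rw [← hzdef]; exact sign_mul_pos hzi
      have hev : ∀ᶠ t in 𝓝 t₀, 0 < Real.sign (z i) * x t i := by
        have hcont : Continuous fun t => Real.sign (z i) * x t i :=
          continuous_const.mul (sol_cont S x hsol i)
        exact (hcont.continuousAt).eventually (eventually_gt_nhds hpos)
      obtain ⟨ε, hε, hball⟩ := Metric.eventually_nhds_iff.1 hev
      refine ⟨ε, hε, ?_, ?_⟩
      · intro t ht
        rw [sigp_of_ne hz hzi]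
        exact hball (by rw [Real.dist_eq]; rw [abs_lt]; constructor <;> [linarith [ht.1]; linarith [ht.2]])
      · intro t ht
        rw [sigm_of_ne hz hzi]
        exact hball (by rw [Real.dist_eq]; rw [abs_lt]; constructor <;> [linarith [ht.1]; linarith [ht.2]])
    | succ m ih =>
      intro i hle
      by_cases h0 : chainLen z i ≤ m
      · exact ih i h0
      · have hzi : z i = 0 := by
          by_contra hne
          rw [chainLen_eq_zero hz hne] at h0
          omega
        have hchain : chainLen z (i - 1) ≤ m := by
          have := chainLen_of_zero hz hzi
          omega
        obtain ⟨ε, hε, hr, hl⟩ := ih (i - 1) hchain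
        refine ⟨ε, hε, ?_, ?_⟩
        · have := sign_prop_right (a := fun t => S.diag t i) (b := fun t => S.sub t i)
            (g := fun t => x t (i - 1)) (f := fun t => x t i)
            (S.cont_diag i) (S.cont_sub i) (sol_cont S x hsol (i - 1))
            (fun t => hsol t i) (σb := cyclicDelta n i) (s := sigp z (i - 1))
            (fun t => delta_sub_pos S i t) hr hzi
          intro t ht
          rw [sigp_of_zero hz hzi]
          have h' := this t ht
          linarith [h']
        · have := sign_prop_left (a := fun t => S.diag t i) (b := fun t => S.sub t i)
            (g := fun t => x t (i - 1)) (f := fun t => x t i)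
            (S.cont_diag i) (S.cont_sub i) (sol_cont S x hsol (i - 1))
            (fun t => hsol t i) (σb := cyclicDelta n i) (s := sigm z (i - 1))
            (fun t => delta_sub_pos S i t) hl hzi
          intro t ht
          rw [sigm_of_zero hz hzi]
          have h' := this t ht
          linarith [h']
  have hall : ∀ i : Fin n, ∃ ε : ℝ, 0 < ε ∧
      ((∀ t ∈ Set.Ioo t₀ (t₀ + ε), 0 < sigp z i * x t i) ∧
       (∀ t ∈ Set.Ioo (t₀ - ε) t₀, 0 < sigm z i * x t i)) :=
    fun i => claim (chainLen z i) i le_rfl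
  choose E hEpos hE using hall
  have hne : Nonempty (Fin n) := ⟨⟨0, Nat.pos_of_ne_zero (NeZero.ne n)⟩⟩
  refine ⟨Finset.univ.inf' Finset.univ_nonempty E, ?_, ?_⟩
  · rw [Finset.lt_inf'_iff]
    exact fun i _ => hEpos i
  · intro i
    have hle : Finset.univ.inf' Finset.univ_nonempty E ≤ E i :=
      Finset.inf'_le E (Finset.mem_univ i)
    constructor
    · intro t ht
      exact (hE i).1 t ⟨ht.1, lt_of_lt_of_le ht.2 (by linarith)⟩
    · intro t ht
      exact (hE i).2 t ⟨lt_of_le_of_lt (by linarith) ht.1, ht.2⟩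
end ode

/- ## Nonvanishing of nontrivial solutions -/

section nonvanish
variable {n : ℕ} [NeZero n]

lemma nonvanish (S : LinCNF n) (x : ℝ → Fin n → ℝ) (hsol : S.IsSolution x) {t₁ : ℝ}
    (h1 : x t₁ = 0) (t : ℝ) : x t = 0 := by
  classical
  have hne : Nonempty (Fin n) := ⟨⟨0, Nat.pos_of_ne_zero (NeZero.ne n)⟩⟩
  set a : ℝ := min t t₁ - 1 with ha
  set b : ℝ := max t t₁ + 1 with hb
  have hab : a < b := by
    have h1 : min t t₁ ≤ t := min_le_left _ _
    have h2 : t ≤ max t t₁ := le_max_left _ _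
    simp only [ha, hb]; linarith
  set c : ℝ → ℝ := fun u => max a (min b u) with hc
  have hcmem : ∀ u, c u ∈ Set.Icc a b := by
    intro u
    refine ⟨le_max_left _ _, max_le (le_of_lt hab) (min_le_left _ _)⟩
  have hceq : ∀ u ∈ Set.Icc a b, c u = u := by
    intro u hu
    simp only [hc]
    rw [min_eq_right hu.2, max_eq_right hu.1]
  obtain ⟨Cd, hCd⟩ : ∃ Cd : Fin n → ℝ, ∀ i, ∀ u ∈ Set.Icc a b, ‖S.diag u i‖ ≤ Cd i := by
    have := fun i => isCompact_Icc.exists_bound_of_continuousOn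
      (s := Set.Icc a b) (S.cont_diag i).continuousOn
    choose Cd hCd using this
    exact ⟨Cd, hCd⟩
  obtain ⟨Cs, hCs⟩ : ∃ Cs : Fin n → ℝ, ∀ i, ∀ u ∈ Set.Icc a b, ‖S.sub u i‖ ≤ Cs i := by
    have := fun i => isCompact_Icc.exists_bound_of_continuousOn
      (s := Set.Icc a b) (S.cont_sub i).continuousOn
    choose Cs hCs using this
    exact ⟨Cs, hCs⟩
  set K₀ : ℝ := Finset.univ.sup' Finset.univ_nonempty (fun i => Cd i + Cs i) with hK₀
  set K : NNReal := Real.toNNReal K₀ with hK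
  set v : ℝ → (Fin n → ℝ) → (Fin n → ℝ) :=
    fun u y i => S.diag (c u) i * y i + S.sub (c u) i * y (i - 1) with hv
  have hlip : ∀ u, LipschitzWith K (v u) := by
    intro u
    apply LipschitzWith.of_dist_le_mul
    intro y y'
    have hKnn : (K : ℝ) * dist y y' ≥ 0 := mul_nonneg K.coe_nonneg dist_nonneg
    rw [dist_pi_le_iff hKnn]
    intro i
    rw [Real.dist_eq]
    have hd1 : |y i - y' i| ≤ dist y y' := by
      rw [← Real.dist_eq]; exact dist_le_pi_dist y y' i
    have hd2 : |y (i - 1) - y' (i - 1)| ≤ dist y y' := by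
      rw [← Real.dist_eq]; exact dist_le_pi_dist y y' (i - 1)
    have hb1 : |S.diag (c u) i| ≤ Cd i := hCd i (c u) (hcmem u)
    have hb2 : |S.sub (c u) i| ≤ Cs i := hCs i (c u) (hcmem u)
    have hKge : Cd i + Cs i ≤ (K : ℝ) := by
      have h1 : Cd i + Cs i ≤ K₀ := by
        rw [hK₀]; exact Finset.le_sup' (fun i => Cd i + Cs i) (Finset.mem_univ i)
      have h2 : K₀ ≤ (K : ℝ) := Real.le_coe_toNNReal K₀
      linarith
    calc |v u y i - v u y' i|
        = |S.diag (c u) i * (y i - y' i) + S.sub (c u) i * (y (i - 1) - y' (i - 1))| := by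
          congr 1; simp only [hv]; ring
      _ ≤ |S.diag (c u) i * (y i - y' i)| + |S.sub (c u) i * (y (i - 1) - y' (i - 1))| :=
          abs_add_le _ _
      _ = |S.diag (c u) i| * |y i - y' i| + |S.sub (c u) i| * |y (i - 1) - y' (i - 1)| := by
          rw [abs_mul, abs_mul]
      _ ≤ Cd i * dist y y' + Cs i * dist y y' := by
          have h0 : (0:ℝ) ≤ |y i - y' i| := abs_nonneg _
          have h0' : (0:ℝ) ≤ |y (i-1) - y' (i-1)| := abs_nonneg _
          have hcd : (0:ℝ) ≤ Cd i := le_trans (abs_nonneg _) hb1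
          have hcs : (0:ℝ) ≤ Cs i := le_trans (abs_nonneg _) hb2
          have := mul_le_mul hb1 hd1 h0 hcd
          have := mul_le_mul hb2 hd2 h0' hcs
          nlinarith [abs_nonneg (S.diag (c u) i), abs_nonneg (S.sub (c u) i)]
      _ = (Cd i + Cs i) * dist y y' := by ring
      _ ≤ (K : ℝ) * dist y y' := by
          have := dist_nonneg (x := y) (y := y')
          nlinarith
  have hxcont : Continuous x := continuous_pi fun i => sol_cont S x hsol i
  have ht₁ : t₁ ∈ Set.Ioo a b := by
    constructor
    · have := min_le_right t t₁; simp only [ha]; linarith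
    · have := le_max_right t t₁; simp only [hb]; linarith
  have heq : Set.EqOn x (fun _ => (0 : Fin n → ℝ)) (Set.Icc a b) := by
    apply ODE_solution_unique_of_mem_Icc (v := v) (s := fun _ => Set.univ)
      (K := K) (fun u _ => (hlip u).lipschitzOnWith) ht₁
    · exact hxcont.continuousOn
    · intro u hu
      rw [hasDerivAt_pi]
      intro i
      have := hsol u i
      simp only [hv, hceq u (Set.mem_Icc_of_Ioo hu)]
      exact this
    · exact fun _ _ => Set.mem_univ _
    · exact continuousOn_const
    · intro u hu
      have h0 : v u 0 = 0 := by
        funext i; simp [hv]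
      rw [h0]
      exact hasDerivAt_const u (0 : Fin n → ℝ)
    · exact fun _ _ => Set.mem_univ _
    · exact h1
  have htmem : t ∈ Set.Icc a b := by
    constructor
    · have := min_le_left t t₁; simp only [ha]; linarith
    · have := le_max_left t t₁; simp only [hb]; linarith
  exact heq htmem

end nonvanish

/- ## Statement 3 -/

lemma lambda_main {n : ℕ} [NeZero n] (σ w : Fin n → ℝ) (hσ : ∀ i, IsSgn (σ i))
    (hw : ∀ i, 0 < σ i * w i) :
    cyclicNm n w = cyclicN n σ ∧ cyclicNM n w = cyclicN n σ := by
  have hwΛ : ∀ i, w i ≠ 0 := by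
    intro i h
    have := hw i
    rw [h, mul_zero] at this
    exact lt_irrefl 0 this
  have hw0 : w ≠ 0 := by
    intro h
    exact hwΛ ⟨0, Nat.pos_of_ne_zero (NeZero.ne n)⟩ (by rw [h]; rfl)
  have h1 := Nm_eq_sigp hw0
  rw [sigp_of_lambda hwΛ, sigm_of_lambda hwΛ] at h1
  have h2 : cyclicN n (fun i => Real.sign (w i)) = cyclicN n σ := by
    apply cyclicN_pattern σ _ hσ
    intro i
    have he : σ i = Real.sign (w i) := (hσ i).eq_sign (hw i)
    have : σ i * Real.sign (w i) = 1 := by rw [← he]; exact (hσ i).mul_self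
    rw [this]; norm_num
  exact ⟨h1.1.trans h2, h1.2.trans h2⟩
/-- If `x(t₀) ∉ 𝒩` then for all small `ε > 0`,
`x(t₀ + ε) ∈ 𝒩` with `N(x(t₀ + ε)) = N_m(x(t₀))` and `x(t₀ − ε) ∈ 𝒩` with
`N(x(t₀ − ε)) = N_M(x(t₀))`. -/
theorem stmt3 (n : ℕ) [NeZero n] (hn : 2 ≤ n) (S : LinCNF n) (x : ℝ → Fin n → ℝ)
    (hsol : S.IsSolution x) (hnontriv : ¬ ∀ t, x t = 0)
    (t₀ : ℝ) (h₀ : x t₀ ∉ cyclicGood n) :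
    ∃ ε₀ > (0 : ℝ), ∀ ε : ℝ, 0 < ε → ε < ε₀ →
      (x (t₀ + ε) ∈ cyclicGood n ∧ cyclicNm n (x (t₀ + ε)) = cyclicNm n (x t₀)) ∧
      (x (t₀ - ε) ∈ cyclicGood n ∧ cyclicNm n (x (t₀ - ε)) = cyclicNM n (x t₀)) := by
  have hz : x t₀ ≠ 0 := by
    intro h
    exact hnontriv fun t => nonvanish S x hsol h t
  obtain ⟨ε₀, hε₀, hsig⟩ := sol_signs S x hsol t₀ hz
  refine ⟨ε₀, hε₀, ?_⟩
  intro ε hε hεlt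
  have hT : t₀ + ε ∈ Set.Ioo t₀ (t₀ + ε₀) := ⟨by linarith, by linarith⟩
  have hT' : t₀ - ε ∈ Set.Ioo (t₀ - ε₀) t₀ := ⟨by linarith, by linarith⟩
  constructor
  · have hro : ∀ i, 0 < sigp (x t₀) i * x (t₀ + ε) i := fun i => (hsig i).1 _ hT
    obtain ⟨hm, hM⟩ := lambda_main (sigp (x t₀)) (x (t₀ + ε)) (isSgn_sigp hz) hro
    exact ⟨show cyclicNm n _ = cyclicNM n _ from hm.trans hM.symm,
      by rw [hm, (Nm_eq_sigp hz).1]⟩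
  · have hlo : ∀ i, 0 < sigm (x t₀) i * x (t₀ - ε) i := fun i => (hsig i).2 _ hT'
    obtain ⟨hm, hM⟩ := lambda_main (sigm (x t₀)) (x (t₀ - ε)) (isSgn_sigm hz) hlo
    exact ⟨show cyclicNm n _ = cyclicNM n _ from hm.trans hM.symm,
      by rw [hm, (Nm_eq_sigp hz).2]⟩
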